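/- arXiv:1602.00732 — 4 statements merged into one kernel-verified Lean document; each statement's English description precedes it below -/
import Mathlib

section
/- The map (m, A) ↦ φ_m(A) is continuous on the set {(m, A) ∈ ℝ² : m ≥ 0, A ≥ 16π m²}. -/
open Real Set Filter Topology

/-- Area of the coordinate sphere of radius `r` in the Schwarzschild manifold of
mass `m`, in isotropic coordinates: `A_m(r) = 4π r² (1 + m/(2r))⁴`. -/
noncomputable def schwA (m r : ℝ) : ℝ := 4 * Real.pi * r ^ 2 * (1 + m / (2 * r)) ^ 4

/-- Volume enclosed between the horizon `r = m/2` and the coordinate sphere of radius `r`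
in the Schwarzschild manifold of mass `m`:
`V_m(r) = ∫_{m/2}^r 4π ρ² (1 + m/(2ρ))⁶ dρ`. -/
noncomputable def schwV (m r : ℝ) : ℝ :=
  ∫ ρ in (m / 2)..r, 4 * Real.pi * ρ ^ 2 * (1 + m / (2 * ρ)) ^ 6

/-- The Schwarzschild isoperimetric profile of mass `m`: `φ_m = V_m ∘ A_m⁻¹`, where
`A_m⁻¹ : [16πm², ∞) → [m/2, ∞)` is the inverse of the (bijective, strictly increasing)
area function `A_m : [m/2, ∞) → [16πm², ∞)`. -/
noncomputable def schwPhi (m A : ℝ) : ℝ :=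
  schwV m (Function.invFunOn (schwA m) (Set.Ici (m / 2)) A)


/-- auxiliary: `f m r = r + m + m²/(4r)`, so that `schwA m r = 4π (f m r)²`. -/
noncomputable def schwF (m r : ℝ) : ℝ := r + m + m ^ 2 / (4 * r)

lemma schwA_eq_f {m r : ℝ} (hm : 0 ≤ m) (hr : m / 2 ≤ r) :
    schwA m r = 4 * Real.pi * (schwF m r) ^ 2 := by
  have hr0 : 0 ≤ r := le_trans (by linarith) hr
  rcases eq_or_lt_of_le hr0 with h | h
  · have hm0 : m = 0 := by linarith [hr.trans_eq h.symm]
    simp [schwA, schwF, ← h, hm0]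
  · unfold schwA schwF
    field_simp
    ring

lemma schwF_nonneg {m r : ℝ} (hm : 0 ≤ m) (hr : 0 ≤ r) : 0 ≤ schwF m r := by
  unfold schwF; positivity

lemma schwF_strictMonoOn {m : ℝ} (hm : 0 ≤ m) : StrictMonoOn (schwF m) (Ici (m / 2)) := by
  rcases eq_or_lt_of_le hm with h | h
  · intro a _ b _ hab
    simp only [schwF, ← h]
    norm_num
    exact hab
  · intro a ha b hb hab
    simp only [mem_Ici] at ha hb
    have ha0 : 0 < a := lt_of_lt_of_le (by linarith) ha
    have hb0 : 0 < b := lt_of_lt_of_le (by linarith) hb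
    have key : schwF m b - schwF m a = (b - a) * (4 * a * b - m ^ 2) / (4 * a * b) := by
      unfold schwF
      field_simp
      ring
    have h4 : m ^ 2 < 4 * a * b := by nlinarith
    have : 0 < schwF m b - schwF m a := by
      rw [key]; exact div_pos (by nlinarith) (by positivity)
    linarith

lemma schwA_strictMonoOn {m : ℝ} (hm : 0 ≤ m) : StrictMonoOn (schwA m) (Ici (m / 2)) := by
  intro a ha b hb hab
  have ha0 : 0 ≤ a := le_trans (by linarith) ha
  have hb0 : 0 ≤ b := le_trans (by linarith) hb
  rw [schwA_eq_f hm ha, schwA_eq_f hm hb]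
  have h1 := schwF_strictMonoOn hm ha hb hab
  have h2 := schwF_nonneg hm ha0
  have h3 : schwF m a ^ 2 < schwF m b ^ 2 := by nlinarith
  nlinarith [Real.pi_pos, h3]

/-- Explicit inverse of the area function. -/
noncomputable def schwR (m A : ℝ) : ℝ :=
  (Real.sqrt (A / (4 * Real.pi)) - m + Real.sqrt ((Real.sqrt (A / (4 * Real.pi)) - m) ^ 2 - m ^ 2)) / 2

lemma schwR_spec {m A : ℝ} (hm : 0 ≤ m) (hA : 16 * Real.pi * m ^ 2 ≤ A) :
    m / 2 ≤ schwR m A ∧ schwA m (schwR m A) = A := by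
  have hpi := Real.pi_pos
  set s := Real.sqrt (A / (4 * Real.pi)) with hs
  have hA0 : 0 ≤ A := le_trans (by positivity) hA
  have hs0 : 0 ≤ s := Real.sqrt_nonneg _
  have hs2 : s ^ 2 = A / (4 * Real.pi) := Real.sq_sqrt (by positivity)
  have hs2m : 2 * m ≤ s := by
    have h1 : (2 * m) ^ 2 ≤ A / (4 * Real.pi) := by
      rw [le_div_iff₀ (by positivity)]
      nlinarith
    rw [← hs2] at h1
    nlinarith [hs0, hm, h1]
  have hD0 : 0 ≤ (s - m) ^ 2 - m ^ 2 := by nlinarith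
  have hDs : Real.sqrt ((s - m) ^ 2 - m ^ 2) ^ 2 = (s - m) ^ 2 - m ^ 2 := Real.sq_sqrt hD0
  have hDnn : 0 ≤ Real.sqrt ((s - m) ^ 2 - m ^ 2) := Real.sqrt_nonneg _
  have hmem : m / 2 ≤ schwR m A := by
    unfold schwR; rw [← hs]; linarith
  refine ⟨hmem, ?_⟩
  have hg0 : 0 ≤ schwR m A := le_trans (by linarith) hmem
  rcases eq_or_lt_of_le hg0 with hg | hg
  · -- g = 0 case : m = 0 and A = 0
    have hgdef : (s - m + Real.sqrt ((s - m) ^ 2 - m ^ 2)) / 2 = 0 := (by unfold schwR at hg; rw [← hs] at hg; linarith)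
    have hm0 : m = 0 := by nlinarith
    have hsm0 : s = 0 := by nlinarith
    have hA00 : A = 0 := by
      by_contra hne
      have : 0 < A := lt_of_le_of_ne hA0 (Ne.symm hne)
      have : 0 < s := Real.sqrt_pos.2 (by positivity)
      linarith
    rw [← hg]
    simp [schwA, hA00]
  · -- g > 0 case
    have hfg : schwF m (schwR m A) = s := by
      unfold schwF schwR
      rw [← hs]
      have hgpos : (0:ℝ) < (s - m + Real.sqrt ((s - m) ^ 2 - m ^ 2)) / 2 := by
        unfold schwR at hg; rw [← hs] at hg; exact hg
      have hne : s - m + Real.sqrt ((s - m) ^ 2 - m ^ 2) ≠ 0 := by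
        intro h0; rw [h0] at hgpos; norm_num at hgpos
      field_simp
      linarith [hDs]
    rw [schwA_eq_f hm hmem, hfg, hs2]
    field_simp

lemma invFunOn_schwA_eq {m A : ℝ} (hm : 0 ≤ m) (hA : 16 * Real.pi * m ^ 2 ≤ A) :
    Function.invFunOn (schwA m) (Set.Ici (m / 2)) A = schwR m A := by
  obtain ⟨hmem, heq⟩ := schwR_spec hm hA
  have hex : ∃ a ∈ Set.Ici (m / 2), schwA m a = A := ⟨schwR m A, hmem, heq⟩
  have h1 := Function.invFunOn_mem hex
  have h2 := Function.invFunOn_eq hex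
  exact (schwA_strictMonoOn hm).injOn h1 hmem (by rw [h2, heq])

/-- Explicit formula for `schwV` via an antiderivative. -/
noncomputable def schwW (m r : ℝ) : ℝ :=
  4 * Real.pi * (r ^ 3 / 3 + 3 * (m / 2) * r ^ 2 + 15 * (m / 2) ^ 2 * r
    + 20 * (m / 2) ^ 3 * Real.log r - 20 * (m / 2) ^ 3 * Real.log (m / 2)
    - 15 * (m / 2) ^ 4 / r - 3 * (m / 2) ^ 5 / r ^ 2 - (m / 2) ^ 6 / (3 * r ^ 3))

lemma schwV_eq_schwW {m r : ℝ} (hm : 0 ≤ m) (hr : m / 2 ≤ r) : schwV m r = schwW m r := by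
  rcases eq_or_lt_of_le hm with hm0 | hm0
  · -- m = 0
    have hm' : m = 0 := hm0.symm
    subst hm'
    have h1 : schwV 0 r = ∫ ρ in (0:ℝ)..r, 4 * Real.pi * ρ ^ 2 := by
      rw [schwV]
      norm_num
    rw [h1]
    rw [intervalIntegral.integral_const_mul, integral_pow]
    rw [schwW]
    norm_num
  · -- m > 0
    set c := m / 2 with hc
    have hc0 : 0 < c := by positivity
    set F : ℝ → ℝ := fun ρ => 4 * Real.pi * (ρ ^ 3 / 3 + 3 * c * ρ ^ 2 + 15 * c ^ 2 * ρ
      + 20 * c ^ 3 * Real.log ρ - 15 * c ^ 4 * ρ⁻¹ - 3 * c ^ 5 * (ρ ^ 2)⁻¹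
      - c ^ 6 * (ρ ^ 3)⁻¹ / 3) with hF
    have hderiv : ∀ x ∈ uIcc c r, HasDerivAt F (4 * Real.pi * x ^ 2 * (1 + m / (2 * x)) ^ 6) x := by
      intro x hx
      rw [uIcc_of_le hr] at hx
      have hx0 : 0 < x := lt_of_lt_of_le hc0 hx.1
      have hxne : x ≠ 0 := ne_of_gt hx0
      have l1 : HasDerivAt (fun ρ : ℝ => ρ ^ 3 / 3) (x ^ 2) x := by
        have := (hasDerivAt_pow 3 x).div_const 3
        exact this.congr_deriv (by push_cast; ring)
      have l2 : HasDerivAt (fun ρ : ℝ => 3 * c * ρ ^ 2) (6 * c * x) x := by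
        have := (hasDerivAt_pow 2 x).const_mul (3 * c)
        exact this.congr_deriv (by push_cast; ring)
      have l3 : HasDerivAt (fun ρ : ℝ => 15 * c ^ 2 * ρ) (15 * c ^ 2) x := by
        have := (hasDerivAt_id x).const_mul (15 * c ^ 2)
        exact this.congr_deriv (by ring)
      have l4 : HasDerivAt (fun ρ : ℝ => 20 * c ^ 3 * Real.log ρ) (20 * c ^ 3 * x⁻¹) x :=
        (Real.hasDerivAt_log hxne).const_mul (20 * c ^ 3)
      have l5 : HasDerivAt (fun ρ : ℝ => 15 * c ^ 4 * ρ⁻¹) (15 * c ^ 4 * (-(x ^ 2)⁻¹)) x :=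
        (hasDerivAt_inv hxne).const_mul (15 * c ^ 4)
      have l6 : HasDerivAt (fun ρ : ℝ => 3 * c ^ 5 * (ρ ^ 2)⁻¹)
          (3 * c ^ 5 * (-(2 * x ^ 1) / (x ^ 2) ^ 2)) x := by
        have := ((hasDerivAt_pow 2 x).inv (pow_ne_zero 2 hxne)).const_mul (3 * c ^ 5)
        exact this.congr_deriv (by push_cast; ring)
      have l7 : HasDerivAt (fun ρ : ℝ => c ^ 6 * (ρ ^ 3)⁻¹ / 3)
          (c ^ 6 * (-(3 * x ^ 2) / (x ^ 3) ^ 2) / 3) x := by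
        have := (((hasDerivAt_pow 3 x).inv (pow_ne_zero 3 hxne)).const_mul (c ^ 6)).div_const 3
        exact this.congr_deriv (by push_cast; ring)
      have H := (((((l1.add l2).add l3).add l4).sub l5).sub l6).sub l7
      have H' := H.const_mul (4 * Real.pi)
      refine H'.congr_deriv ?_
      field_simp
      ring
    have hint : IntervalIntegrable (fun ρ : ℝ => 4 * Real.pi * ρ ^ 2 * (1 + m / (2 * ρ)) ^ 6)
        MeasureTheory.volume c r := by
      apply ContinuousOn.intervalIntegrable
      intro x hx
      rw [uIcc_of_le hr] at hx
      have hxne : (2 : ℝ) * x ≠ 0 := by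
        have hx0 : 0 < x := lt_of_lt_of_le hc0 hx.1
        positivity
      exact (((continuousWithinAt_const.mul (continuousWithinAt_id.pow 2)).mul
        (((continuousWithinAt_const.div
          (continuousWithinAt_const.mul continuousWithinAt_id) hxne).const_add 1).pow 6)))
    have key := intervalIntegral.integral_eq_sub_of_hasDerivAt hderiv hint
    have hrne : r ≠ 0 := ne_of_gt (lt_of_lt_of_le hc0 hr)
    have hcne : c ≠ 0 := ne_of_gt hc0
    rw [schwV, ← hc, key, hF, schwW, ← hc]
    field_simp
    ring

/-- The closed region `{(m, r) : 0 ≤ m, m/2 ≤ r}`. -/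
def schwS' : Set (ℝ × ℝ) := {p : ℝ × ℝ | 0 ≤ p.1 ∧ p.1 / 2 ≤ p.2}

lemma philog_tendsto : Tendsto (fun x : ℝ => x ^ 3 * Real.log x) (𝓝[Ici (0:ℝ)] 0) (𝓝 0) := by
  rw [← Set.Ioi_insert, nhdsWithin_insert]
  rw [tendsto_sup]
  constructor
  · refine tendsto_pure_left.mpr fun s hs => ?_
    have h0 : (0:ℝ) ^ 3 * Real.log 0 = 0 := by simp
    rw [h0]
    exact mem_of_mem_nhds hs
  · have h := tendsto_log_mul_rpow_nhdsGT_zero (show (0:ℝ) < 3 by norm_num)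
    have heq : (fun x : ℝ => Real.log x * x ^ (3:ℝ)) =ᶠ[𝓝[>] (0:ℝ)]
        fun x : ℝ => x ^ 3 * Real.log x := by
      filter_upwards [self_mem_nhdsWithin] with x hx
      rw [mul_comm, show x ^ (3:ℝ) = x ^ (3:ℕ) from Real.rpow_natCast x 3]
    exact h.congr' heq

lemma snd_tendsto_within : Tendsto (fun q : ℝ × ℝ => q.2)
    (𝓝[schwS'] ((0:ℝ), (0:ℝ))) (𝓝[Ici (0:ℝ)] 0) := by
  rw [tendsto_nhdsWithin_iff]
  refine ⟨(continuous_snd.tendsto _).mono_left nhdsWithin_le_nhds, ?_⟩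
  filter_upwards [self_mem_nhdsWithin] with q hq
  exact le_trans (by linarith [hq.1]) hq.2

lemma boundB_tendsto : Tendsto (fun q : ℝ × ℝ => 20 * (|q.2 ^ 3 * Real.log q.2| + q.2 ^ 3))
    (𝓝[schwS'] ((0:ℝ), (0:ℝ))) (𝓝 0) := by
  have h1 : Tendsto (fun q : ℝ × ℝ => q.2 ^ 3 * Real.log q.2)
      (𝓝[schwS'] ((0:ℝ), (0:ℝ))) (𝓝 0) := philog_tendsto.comp snd_tendsto_within
  have h2 : Tendsto (fun q : ℝ × ℝ => q.2 ^ 3) (𝓝[schwS'] ((0:ℝ), (0:ℝ))) (𝓝 0) := by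
    have := ((continuous_snd.pow 3 : Continuous (fun q : ℝ × ℝ => q.2 ^ 3)).tendsto ((0:ℝ), (0:ℝ))).mono_left
      (nhdsWithin_le_nhds (s := schwS'))
    exact this.mono_right (le_of_eq (by simp))
  have := (h1.abs.add h2).const_mul (20:ℝ)
  simpa using this

/-- points of `schwS'` with `p.2 = 0` are `(0,0)`. -/
lemma schwS'_eq_zero {p : ℝ × ℝ} (hp : p ∈ schwS') (h2 : p.2 = 0) : p = ((0:ℝ), (0:ℝ)) := by
  obtain ⟨h1, hle⟩ := hp
  have : p.1 = 0 := by linarith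
  exact Prod.ext_iff.mpr ⟨this, h2⟩

lemma cwa_of_tendsto_zero {f : ℝ × ℝ → ℝ} {s : Set (ℝ × ℝ)} {p : ℝ × ℝ} (h0 : f p = 0)
    (h : Tendsto f (𝓝[s] p) (𝓝 0)) : ContinuousWithinAt f s p := by
  unfold ContinuousWithinAt
  rw [h0]
  exact h

lemma t4_cont : ContinuousOn (fun p : ℝ × ℝ => 20 * (p.1 / 2) ^ 3 * Real.log p.2) schwS' := by
  intro p hp
  obtain ⟨hm0, hle⟩ := hp
  have hr0 : 0 ≤ p.2 := le_trans (by linarith) hle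
  rcases eq_or_lt_of_le hr0 with h2 | h2
  · have hp00 : p = ((0:ℝ), (0:ℝ)) := schwS'_eq_zero ⟨hm0, hle⟩ h2.symm
    subst hp00
    refine cwa_of_tendsto_zero (by norm_num) ?_
    refine squeeze_zero_norm' ?_ boundB_tendsto
    filter_upwards [self_mem_nhdsWithin] with q hq
    obtain ⟨hq1, hq2⟩ := hq
    have hc0 : 0 ≤ q.1 / 2 := by linarith
    have hcr : q.1 / 2 ≤ q.2 := hq2
    have hq20 : 0 ≤ q.2 := le_trans hc0 hcr
    have e1 : ‖20 * (q.1 / 2) ^ 3 * Real.log q.2‖ = 20 * (q.1 / 2) ^ 3 * |Real.log q.2| := by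
      rw [Real.norm_eq_abs, abs_mul, abs_of_nonneg (by nlinarith [pow_nonneg hc0 3])]
    have e2 : |q.2 ^ 3 * Real.log q.2| = q.2 ^ 3 * |Real.log q.2| := by
      rw [abs_mul, abs_of_nonneg (pow_nonneg hq20 3)]
    have h3 : (q.1 / 2) ^ 3 ≤ q.2 ^ 3 := by gcongr
    rw [e1, e2]
    nlinarith [abs_nonneg (Real.log q.2), pow_nonneg (le_trans hc0 hcr) 3]
  · refine ContinuousAt.continuousWithinAt ?_
    exact (by fun_prop : ContinuousAt (fun p : ℝ × ℝ => 20 * (p.1 / 2) ^ 3) p).mul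
      (ContinuousAt.log continuous_snd.continuousAt (ne_of_gt h2))

lemma t5_cont : ContinuousOn (fun p : ℝ × ℝ => 20 * (p.1 / 2) ^ 3 * Real.log (p.1 / 2)) schwS' := by
  intro p hp
  obtain ⟨hm0, hle⟩ := hp
  rcases eq_or_lt_of_le hm0 with h1 | h1
  · -- p.1 = 0
    have hp1 : p.1 = 0 := h1.symm
    refine cwa_of_tendsto_zero (by rw [hp1]; norm_num) ?_
    have hfst : Tendsto (fun q : ℝ × ℝ => q.1 / 2) (𝓝[schwS'] p) (𝓝[Ici (0:ℝ)] 0) := by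
      rw [tendsto_nhdsWithin_iff]
      constructor
      · have : Tendsto (fun q : ℝ × ℝ => q.1 / 2) (𝓝 p) (𝓝 (p.1 / 2)) :=
          (continuous_fst.div_const 2).tendsto p
        rw [hp1] at this
        simpa using this.mono_left nhdsWithin_le_nhds
      · filter_upwards [self_mem_nhdsWithin] with q hq
        exact div_nonneg hq.1 (by norm_num)
    have h := (philog_tendsto.comp hfst).const_mul (20:ℝ)
    simp only [mul_zero] at h
    refine h.congr (fun q => ?_)
    simp only [Function.comp]
    ring
  · refine ContinuousAt.continuousWithinAt ?_
    have hne : p.1 / 2 ≠ 0 := ne_of_gt (by linarith)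
    exact (by fun_prop : ContinuousAt (fun p : ℝ × ℝ => 20 * (p.1 / 2) ^ 3) p).mul
      (ContinuousAt.log ((continuous_fst.div_const 2).continuousAt) hne)

lemma t6_cont : ContinuousOn (fun p : ℝ × ℝ => 15 * (p.1 / 2) ^ 4 / p.2) schwS' := by
  intro p hp
  obtain ⟨hm0, hle⟩ := hp
  have hr0 : 0 ≤ p.2 := le_trans (by linarith) hle
  rcases eq_or_lt_of_le hr0 with h2 | h2
  · have hp00 : p = ((0:ℝ), (0:ℝ)) := schwS'_eq_zero ⟨hm0, hle⟩ h2.symm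
    subst hp00
    refine cwa_of_tendsto_zero (by norm_num) ?_
    refine squeeze_zero_norm' ?_ boundB_tendsto
    filter_upwards [self_mem_nhdsWithin] with q hq
    obtain ⟨hq1, hq2⟩ := hq
    have hc0 : 0 ≤ q.1 / 2 := by linarith
    rcases eq_or_lt_of_le (le_trans hc0 hq2) with hr | hr
    · have hq10 : q.1 = 0 := by linarith [hq2.trans_eq hr.symm]
      rw [hq10, ← hr]
      norm_num
    · have e1 : ‖15 * (q.1 / 2) ^ 4 / q.2‖ = 15 * (q.1 / 2) ^ 4 / q.2 := by
        rw [Real.norm_eq_abs, abs_of_nonneg (div_nonneg (by positivity) hr.le)]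
      have h4 : (q.1 / 2) ^ 4 ≤ q.2 ^ 4 := by gcongr
      have hb : 15 * (q.1 / 2) ^ 4 / q.2 ≤ 15 * q.2 ^ 3 := by
        rw [div_le_iff₀ hr]
        nlinarith
      rw [e1]
      nlinarith [abs_nonneg (q.2 ^ 3 * Real.log q.2), pow_nonneg (le_of_lt hr) 3]
  · refine ContinuousAt.continuousWithinAt ?_
    exact ContinuousAt.div (by fun_prop) continuous_snd.continuousAt (ne_of_gt h2)

lemma t7_cont : ContinuousOn (fun p : ℝ × ℝ => 3 * (p.1 / 2) ^ 5 / p.2 ^ 2) schwS' := by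
  intro p hp
  obtain ⟨hm0, hle⟩ := hp
  have hr0 : 0 ≤ p.2 := le_trans (by linarith) hle
  rcases eq_or_lt_of_le hr0 with h2 | h2
  · have hp00 : p = ((0:ℝ), (0:ℝ)) := schwS'_eq_zero ⟨hm0, hle⟩ h2.symm
    subst hp00
    refine cwa_of_tendsto_zero (by norm_num) ?_
    refine squeeze_zero_norm' ?_ boundB_tendsto
    filter_upwards [self_mem_nhdsWithin] with q hq
    obtain ⟨hq1, hq2⟩ := hq
    have hc0 : 0 ≤ q.1 / 2 := by linarith
    rcases eq_or_lt_of_le (le_trans hc0 hq2) with hr | hr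
    · have hq10 : q.1 = 0 := by linarith [hq2.trans_eq hr.symm]
      rw [hq10, ← hr]
      norm_num
    · have e1 : ‖3 * (q.1 / 2) ^ 5 / q.2 ^ 2‖ = 3 * (q.1 / 2) ^ 5 / q.2 ^ 2 := by
        rw [Real.norm_eq_abs,
          abs_of_nonneg (div_nonneg (by nlinarith [pow_nonneg hc0 5]) (by positivity))]
      have h5 : (q.1 / 2) ^ 5 ≤ q.2 ^ 5 := by gcongr
      have hb : 3 * (q.1 / 2) ^ 5 / q.2 ^ 2 ≤ 3 * q.2 ^ 3 := by
        rw [div_le_iff₀ (by positivity)]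
        nlinarith
      rw [e1]
      nlinarith [abs_nonneg (q.2 ^ 3 * Real.log q.2), pow_nonneg (le_of_lt hr) 3]
  · refine ContinuousAt.continuousWithinAt ?_
    exact ContinuousAt.div (by fun_prop) (by fun_prop) (pow_ne_zero 2 (ne_of_gt h2))

lemma t8_cont : ContinuousOn (fun p : ℝ × ℝ => (p.1 / 2) ^ 6 / (3 * p.2 ^ 3)) schwS' := by
  intro p hp
  obtain ⟨hm0, hle⟩ := hp
  have hr0 : 0 ≤ p.2 := le_trans (by linarith) hle
  rcases eq_or_lt_of_le hr0 with h2 | h2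
  · have hp00 : p = ((0:ℝ), (0:ℝ)) := schwS'_eq_zero ⟨hm0, hle⟩ h2.symm
    subst hp00
    refine cwa_of_tendsto_zero (by norm_num) ?_
    refine squeeze_zero_norm' ?_ boundB_tendsto
    filter_upwards [self_mem_nhdsWithin] with q hq
    obtain ⟨hq1, hq2⟩ := hq
    have hc0 : 0 ≤ q.1 / 2 := by linarith
    rcases eq_or_lt_of_le (le_trans hc0 hq2) with hr | hr
    · have hq10 : q.1 = 0 := by linarith [hq2.trans_eq hr.symm]
      rw [hq10, ← hr]
      norm_num
    · have e1 : ‖(q.1 / 2) ^ 6 / (3 * q.2 ^ 3)‖ = (q.1 / 2) ^ 6 / (3 * q.2 ^ 3) := by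
        rw [Real.norm_eq_abs,
          abs_of_nonneg (div_nonneg (by positivity) (by nlinarith [pow_nonneg hr.le 3]))]
      have h6 : (q.1 / 2) ^ 6 ≤ q.2 ^ 6 := by gcongr
      have hb : (q.1 / 2) ^ 6 / (3 * q.2 ^ 3) ≤ q.2 ^ 3 := by
        rw [div_le_iff₀ (by nlinarith [pow_pos hr 3])]
        nlinarith [pow_nonneg hr.le 6]
      rw [e1]
      nlinarith [abs_nonneg (q.2 ^ 3 * Real.log q.2), pow_nonneg (le_of_lt hr) 3]
  · refine ContinuousAt.continuousWithinAt ?_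
    have hne : 3 * p.2 ^ 3 ≠ 0 := ne_of_gt (by nlinarith [pow_pos h2 3])
    exact ContinuousAt.div (by fun_prop) (by fun_prop) hne

lemma schwW_continuousOn : ContinuousOn (fun p : ℝ × ℝ => schwW p.1 p.2) schwS' := by
  unfold schwW
  refine continuousOn_const.mul ?_
  have hA : ContinuousOn (fun p : ℝ × ℝ => p.2 ^ 3 / 3) schwS' :=
    (by fun_prop : Continuous (fun p : ℝ × ℝ => p.2 ^ 3 / 3)).continuousOn
  have hB : ContinuousOn (fun p : ℝ × ℝ => 3 * (p.1 / 2) * p.2 ^ 2) schwS' :=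
    (by fun_prop : Continuous (fun p : ℝ × ℝ => 3 * (p.1 / 2) * p.2 ^ 2)).continuousOn
  have hC : ContinuousOn (fun p : ℝ × ℝ => 15 * (p.1 / 2) ^ 2 * p.2) schwS' :=
    (by fun_prop : Continuous (fun p : ℝ × ℝ => 15 * (p.1 / 2) ^ 2 * p.2)).continuousOn
  exact (((((((hA.add hB).add hC).add t4_cont).sub t5_cont).sub t6_cont).sub t7_cont).sub t8_cont)

/-- `(m, A) ↦ φ_m(A)` is continuous on `{(m, A) : m ≥ 0, A ≥ 16πm²}`. -/
theorem schwPhi_continuousOn :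
    ContinuousOn (fun p : ℝ × ℝ => schwPhi p.1 p.2)
      {p : ℝ × ℝ | 0 ≤ p.1 ∧ 16 * Real.pi * p.1 ^ 2 ≤ p.2} := by
  have hR : Continuous (fun p : ℝ × ℝ => schwR p.1 p.2) := by
    unfold schwR
    have c1 : Continuous (fun p : ℝ × ℝ => Real.sqrt (p.2 / (4 * Real.pi))) :=
      (continuous_snd.div_const _).sqrt
    have c2 : Continuous (fun p : ℝ × ℝ =>
        Real.sqrt ((Real.sqrt (p.2 / (4 * Real.pi)) - p.1) ^ 2 - p.1 ^ 2)) :=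
      ((c1.sub continuous_fst).pow 2).sub (continuous_fst.pow 2) |>.sqrt
    exact ((c1.sub continuous_fst).add c2).div_const 2
  have hpair : Continuous (fun p : ℝ × ℝ => ((p.1, schwR p.1 p.2) : ℝ × ℝ)) :=
    continuous_fst.prodMk hR
  have hmap : Set.MapsTo (fun p : ℝ × ℝ => ((p.1, schwR p.1 p.2) : ℝ × ℝ))
      {p : ℝ × ℝ | 0 ≤ p.1 ∧ 16 * Real.pi * p.1 ^ 2 ≤ p.2} schwS' :=
    fun p hp => ⟨hp.1, (schwR_spec hp.1 hp.2).1⟩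
  have hcomp := schwW_continuousOn.comp hpair.continuousOn hmap
  refine ContinuousOn.congr hcomp ?_
  intro p hp
  show schwPhi p.1 p.2 = _
  simp only [Function.comp]
  rw [schwPhi, invFunOn_schwA_eq hp.1 hp.2, schwV_eq_schwW hp.1 (schwR_spec hp.1 hp.2).1]
end

section
/- For every constant μ > 0, there exist constants C > 0 and A₀ > 16π μ² such that for all m ∈ [0, μ] and all A ≥ A₀, |(2/A)·(φ_m(A) − A^{3/2}/(6√π)) − m| ≤ C·A^{−1/2}. In other words, (2/A)(φ_m(A) − A^{3/2}/(6√π)) = m + O(A^{−1/2}), with the error estimate uniform for m ∈ [0, μ]. -/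
lemma schwA_surj (m A : ℝ) (hm : 0 ≤ m) (hA : 16 * Real.pi * m ^ 2 ≤ A) :
    ∃ r ∈ Set.Ici (m / 2), schwA m r = A := by
  have hπ := Real.pi_pos
  have hA0 : 0 ≤ A := le_trans (by positivity) hA
  set R := m / 2 + Real.sqrt (A / (4 * Real.pi)) with hR
  have hsq : 0 ≤ Real.sqrt (A / (4 * Real.pi)) := Real.sqrt_nonneg _
  have hmR : m / 2 ≤ R := by rw [hR]; linarith
  have hR0 : 0 ≤ R := le_trans (by positivity) hmR
  have hfR : A ≤ schwA m R := by
    have h1 : 4 * Real.pi * (Real.sqrt (A / (4 * Real.pi))) ^ 2 = A := by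
      rw [Real.sq_sqrt (by positivity)]; field_simp
    have hsR : Real.sqrt (A / (4 * Real.pi)) ≤ R := by rw [hR]; linarith
    have h2 : 4 * Real.pi * (Real.sqrt (A / (4 * Real.pi))) ^ 2 ≤ 4 * Real.pi * R ^ 2 := by
      have := pow_le_pow_left₀ hsq hsR 2
      nlinarith
    have hx : 0 ≤ m / (2 * R) := by
      rcases eq_or_lt_of_le hR0 with h | h
      · simp [← h]
      · positivity
    have h3 : (1:ℝ) ≤ (1 + m / (2 * R)) ^ 4 := by
      have := pow_le_pow_left₀ (by norm_num : (0:ℝ) ≤ 1) (by linarith : (1:ℝ) ≤ 1 + m / (2 * R)) 4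
      simpa using this
    have h4 : 4 * Real.pi * R ^ 2 ≤ schwA m R := by
      unfold schwA
      nlinarith [mul_nonneg (by positivity : (0:ℝ) ≤ 4 * Real.pi * R ^ 2)
        (by linarith : (0:ℝ) ≤ (1 + m / (2 * R)) ^ 4 - 1)]
    have h5 := h2.trans h4
    rw [h1] at h5
    exact h5
  have hfm : schwA m (m / 2) ≤ A := by
    rcases eq_or_lt_of_le hm with h | h
    · subst h; simpa [schwA] using hA0
    · have : schwA m (m / 2) = 16 * Real.pi * m ^ 2 := by
        unfold schwA
        have h2 : (2 : ℝ) * (m / 2) = m := by ring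
        rw [h2]
        field_simp
        ring
      linarith
  have hcont : ContinuousOn (schwA m) (Set.Icc (m / 2) R) := by
    rcases eq_or_lt_of_le hm with h | h
    · subst h
      have he : schwA 0 = fun r => 4 * Real.pi * r ^ 2 := by
        funext r; simp [schwA]
      rw [he]; fun_prop
    · apply ContinuousOn.mul
      · fun_prop
      · apply ContinuousOn.pow
        apply ContinuousOn.add continuousOn_const
        apply ContinuousOn.div continuousOn_const (by fun_prop)
        intro x hx
        have : 0 < x := lt_of_lt_of_le (by linarith) hx.1
        positivity
  obtain ⟨r, hr, hrA⟩ := intermediate_value_Icc hmR hcont ⟨hfm, hfR⟩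
  exact ⟨r, hr.1, hrA⟩


lemma schwV_identity (m r : ℝ) (hm : 0 < m) (hr : m / 2 ≤ r) :
    schwV m r = 4 * Real.pi / 3 * (r + m / 2) ^ 6 / r ^ 3
      + 2 * Real.pi * m * (r + m / 2) ^ 4 / r ^ 2 - 56 * Real.pi / 3 * m ^ 3
      + ∫ ρ in (m / 2)..r, 4 * Real.pi * m * (ρ + m / 2) ^ 3 * (3 / 2 * m * ρ + m ^ 2 / 4) / ρ ^ 4 := by
  have hπ := Real.pi_pos
  set G : ℝ → ℝ := fun ρ => 4 * Real.pi / 3 * ((ρ + m / 2) ^ 6 / ρ ^ 3)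
      + 2 * Real.pi * m * ((ρ + m / 2) ^ 4 / ρ ^ 2) with hG
  have huIcc : Set.uIcc (m / 2) r = Set.Icc (m / 2) r := Set.uIcc_of_le hr
  have hpos : ∀ ρ ∈ Set.uIcc (m / 2) r, 0 < ρ := by
    intro ρ hρ
    rw [huIcc] at hρ
    linarith [hρ.1]
  have key : ∀ ρ ∈ Set.uIcc (m / 2) r,
      HasDerivAt G (4 * Real.pi * ρ ^ 2 * (1 + m / (2 * ρ)) ^ 6
        - 4 * Real.pi * m * (ρ + m / 2) ^ 3 * (3 / 2 * m * ρ + m ^ 2 / 4) / ρ ^ 4) ρ := by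
    intro ρ hρ
    have hρ0 : ρ ≠ 0 := ne_of_gt (hpos ρ hρ)
    have h1 : HasDerivAt (fun x : ℝ => (x + m / 2) ^ 6) (6 * (ρ + m / 2) ^ 5) ρ := by
      simpa using ((hasDerivAt_id ρ).add_const (m / 2)).fun_pow 6
    have h2 : HasDerivAt (fun x : ℝ => (x + m / 2) ^ 4) (4 * (ρ + m / 2) ^ 3) ρ := by
      simpa using ((hasDerivAt_id ρ).add_const (m / 2)).fun_pow 4
    have h3 : HasDerivAt (fun x : ℝ => x ^ 3) (3 * ρ ^ 2) ρ := by
      simpa using hasDerivAt_pow 3 ρ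
    have h4 : HasDerivAt (fun x : ℝ => x ^ 2) (2 * ρ) ρ := by
      simpa using hasDerivAt_pow 2 ρ
    have hd := ((h1.div h3 (pow_ne_zero 3 hρ0)).const_mul (4 * Real.pi / 3)).add
      ((h2.div h4 (pow_ne_zero 2 hρ0)).const_mul (2 * Real.pi * m))
    refine hd.congr_deriv ?_
    field_simp
    ring
  have hc1 : ContinuousOn (fun ρ : ℝ => 4 * Real.pi * ρ ^ 2 * (1 + m / (2 * ρ)) ^ 6)
      (Set.uIcc (m / 2) r) := by
    apply ContinuousOn.mul (by fun_prop)
    apply ContinuousOn.pow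
    apply ContinuousOn.add continuousOn_const
    apply ContinuousOn.div continuousOn_const (by fun_prop)
    intro x hx
    have := hpos x hx
    positivity
  have hc2 : ContinuousOn (fun ρ : ℝ => 4 * Real.pi * m * (ρ + m / 2) ^ 3 * (3 / 2 * m * ρ + m ^ 2 / 4) / ρ ^ 4)
      (Set.uIcc (m / 2) r) := by
    apply ContinuousOn.div (by fun_prop) (by fun_prop)
    intro x hx
    exact pow_ne_zero 4 (ne_of_gt (hpos x hx))
  have hi1 : IntervalIntegrable _ MeasureTheory.volume (m / 2) r := hc1.intervalIntegrable
  have hi2 : IntervalIntegrable _ MeasureTheory.volume (m / 2) r := hc2.intervalIntegrable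
  have hftc := intervalIntegral.integral_eq_sub_of_hasDerivAt key (hi1.sub hi2)
  rw [intervalIntegral.integral_sub hi1 hi2] at hftc
  have hGm : G (m / 2) = 56 * Real.pi / 3 * m ^ 3 := by
    rw [hG]
    have hm0 : (m : ℝ) ≠ 0 := ne_of_gt hm
    field_simp
    ring
  have hGr : G r = 4 * Real.pi / 3 * (r + m / 2) ^ 6 / r ^ 3
      + 2 * Real.pi * m * (r + m / 2) ^ 4 / r ^ 2 := by rw [hG]; ring
  unfold schwV
  rw [hGr, hGm] at hftc
  linarith

lemma integral_k_nonneg (m r : ℝ) (hm : 0 < m) (hr : m / 2 ≤ r) :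
    0 ≤ ∫ ρ in (m / 2)..r, 4 * Real.pi * m * (ρ + m / 2) ^ 3 * (3 / 2 * m * ρ + m ^ 2 / 4) / ρ ^ 4 := by
  have hπ := Real.pi_pos
  apply intervalIntegral.integral_nonneg hr
  intro ρ hρ
  have h1 : 0 < ρ := by linarith [hρ.1]
  positivity

lemma integral_k_le (m r : ℝ) (hm : 0 < m) (hr : m / 2 ≤ r) :
    (∫ ρ in (m / 2)..r, 4 * Real.pi * m * (ρ + m / 2) ^ 3 * (3 / 2 * m * ρ + m ^ 2 / 4) / ρ ^ 4)
      ≤ 64 * Real.pi * m ^ 2 * (r - m / 2) := by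
  have hπ := Real.pi_pos
  have hpos : ∀ ρ ∈ Set.uIcc (m / 2) r, (0:ℝ) < ρ := by
    intro ρ hρ
    rw [Set.uIcc_of_le hr] at hρ
    linarith [hρ.1]
  have hc : ContinuousOn (fun ρ : ℝ => 4 * Real.pi * m * (ρ + m / 2) ^ 3 * (3 / 2 * m * ρ + m ^ 2 / 4) / ρ ^ 4)
      (Set.uIcc (m / 2) r) := by
    apply ContinuousOn.div (by fun_prop) (by fun_prop)
    intro x hx
    exact pow_ne_zero 4 (ne_of_gt (hpos x hx))
  have hi : IntervalIntegrable _ MeasureTheory.volume (m / 2) r := hc.intervalIntegrable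
  have hconst : IntervalIntegrable (fun _ : ℝ => 64 * Real.pi * m ^ 2) MeasureTheory.volume (m / 2) r :=
    intervalIntegrable_const
  have hle := intervalIntegral.integral_mono_on hr hi hconst ?_
  · rw [intervalIntegral.integral_const] at hle
    simpa [smul_eq_mul, mul_comm] using hle
  · intro ρ hρ
    have h1 : m / 2 ≤ ρ := hρ.1
    have h2 : 0 < ρ := by linarith
    rw [div_le_iff₀ (by positivity)]
    have ha : ρ + m / 2 ≤ 2 * ρ := by linarith
    have hb : (ρ + m / 2) ^ 3 ≤ (2 * ρ) ^ 3 :=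
      pow_le_pow_left₀ (by linarith) ha 3
    have hcne : 3 / 2 * m * ρ + m ^ 2 / 4 ≤ 2 * m * ρ := by nlinarith
    have hXY : (ρ + m / 2) ^ 3 * (3 / 2 * m * ρ + m ^ 2 / 4) ≤ (2 * ρ) ^ 3 * (2 * m * ρ) :=
      mul_le_mul hb hcne (by positivity) (by positivity)
    have hfin := mul_le_mul_of_nonneg_left hXY (show (0:ℝ) ≤ 4 * Real.pi * m by positivity)
    nlinarith [hfin]

set_option maxHeartbeats 2000000 in
/-- `(2/A)(φ_m(A) − A^{3/2}/(6√π)) = m + O(A^{−1/2})`, uniformly for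
`m ∈ [0, μ]`. -/
theorem schwPhi_mass_expansion_uniform (μ : ℝ) (hμ : 0 < μ) :
    ∃ C > (0 : ℝ), ∃ A₀ > 16 * Real.pi * μ ^ 2, ∀ m ∈ Set.Icc (0 : ℝ) μ, ∀ A ≥ A₀,
      |2 / A * (schwPhi m A - A ^ ((3 : ℝ) / 2) / (6 * Real.sqrt Real.pi)) - m|
        ≤ C * A ^ (-(1 : ℝ) / 2) := by
  have hπ := Real.pi_pos
  have hsqπ : 0 < Real.sqrt Real.pi := Real.sqrt_pos.mpr hπ
  refine ⟨83 * Real.sqrt Real.pi * μ ^ 2, by positivity, 64 * Real.pi * μ ^ 2 + 1, by nlinarith, ?_⟩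
  intro m hm A hA
  have hApos : 0 < A := by nlinarith
  have hA16 : 16 * Real.pi * m ^ 2 ≤ A := by
    have : m ^ 2 ≤ μ ^ 2 := pow_le_pow_left₀ hm.1 hm.2 2
    nlinarith
  have hsur := schwA_surj m A hm.1 hA16
  unfold schwPhi
  set r := Function.invFunOn (schwA m) (Set.Ici (m / 2)) A with hrdef
  have hrmem : r ∈ Set.Ici (m / 2) := Function.invFunOn_mem hsur
  have hrA : schwA m r = A := Function.invFunOn_eq hsur
  have hmr : m / 2 ≤ r := hrmem
  have hrnn : (0:ℝ) ≤ r := le_trans (by linarith [hm.1]) hmr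
  have hr0 : 0 < r := by
    rcases hrnn.lt_or_eq with h | h
    · exact h
    · exfalso
      rw [← h] at hrA
      simp [schwA] at hrA
      linarith
  -- r > μ
  have hrs : A ≤ 64 * Real.pi * r ^ 2 := by
    rw [← hrA]
    unfold schwA
    have hx0 : 0 ≤ m / (2 * r) := div_nonneg hm.1 (by linarith)
    have hx1 : m / (2 * r) ≤ 1 := by
      rw [div_le_one (by linarith)]; linarith
    have h16 : (1 + m / (2 * r)) ^ 4 ≤ 16 := by
      have := pow_le_pow_left₀ (by linarith : (0:ℝ) ≤ 1 + m / (2 * r))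
        (by linarith : 1 + m / (2 * r) ≤ 2) 4
      norm_num at this
      linarith
    nlinarith [mul_le_mul_of_nonneg_left h16 (show (0:ℝ) ≤ 4 * Real.pi * r ^ 2 by positivity)]
  have hμr : μ < r := by
    have h2 : μ ^ 2 < r ^ 2 := by
      by_contra hcon
      push_neg at hcon
      have : 64 * Real.pi * r ^ 2 ≤ 64 * Real.pi * μ ^ 2 := by nlinarith
      linarith
    exact lt_of_pow_lt_pow_left₀ 2 hrnn h2
  -- rpow facts
  have h32 : A ^ ((3:ℝ)/2) = A * Real.sqrt A := by
    rw [show ((3:ℝ)/2) = 1 + 1/2 by norm_num, Real.rpow_add hApos, Real.rpow_one,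
      ← Real.sqrt_eq_rpow]
  have hneg : A ^ (-(1:ℝ)/2) = (Real.sqrt A)⁻¹ := by
    rw [show (-(1:ℝ)/2) = -(1/2 : ℝ) by norm_num, Real.rpow_neg hApos.le,
      ← Real.sqrt_eq_rpow]
  rcases eq_or_lt_of_le hm.1 with hm0 | hm0
  · -- m = 0
    subst hm0
    have hrA' : 4 * Real.pi * r ^ 2 = A := by
      rw [← hrA]; simp [schwA]
    have hV : schwV 0 r = 4 * Real.pi / 3 * r ^ 3 := by
      unfold schwV
      simp only [zero_div, add_zero, one_pow, mul_one]
      rw [intervalIntegral.integral_const_mul, integral_pow]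
      norm_num
      ring
    have hsA : Real.sqrt A = 2 * Real.sqrt Real.pi * r := by
      rw [← hrA', show 4 * Real.pi * r ^ 2 = (2 * Real.sqrt Real.pi * r) ^ 2 by
        rw [mul_pow, mul_pow, Real.sq_sqrt hπ.le]; ring, Real.sqrt_sq (by positivity)]
    have hA32 : A ^ ((3:ℝ)/2) / (6 * Real.sqrt Real.pi) = 4 * Real.pi / 3 * r ^ 3 := by
      rw [h32, hsA, ← hrA']
      field_simp
      ring
    rw [hV, hA32]
    simp only [sub_self, mul_zero, sub_zero, zero_sub, abs_neg, abs_zero]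
    positivity
  · -- 0 < m
    set s := (r + m / 2) ^ 2 / r with hsdef
    have hs : 0 < s := by positivity
    have hAs : A = 4 * Real.pi * s ^ 2 := by
      rw [← hrA]
      unfold schwA
      rw [hsdef]
      field_simp
    have hsA : Real.sqrt A = 2 * Real.sqrt Real.pi * s := by
      rw [hAs, show 4 * Real.pi * s ^ 2 = (2 * Real.sqrt Real.pi * s) ^ 2 by
        rw [mul_pow, mul_pow, Real.sq_sqrt hπ.le]; ring, Real.sqrt_sq (by positivity)]
    have hA32 : A ^ ((3:ℝ)/2) / (6 * Real.sqrt Real.pi) = 4 * Real.pi / 3 * s ^ 3 := by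
      rw [h32, hsA, hAs]
      field_simp
      ring
    have hs2 : s ^ 2 = (r + m / 2) ^ 4 / r ^ 2 := by
      rw [hsdef, div_pow, ← pow_mul]
    have hs3 : s ^ 3 = (r + m / 2) ^ 6 / r ^ 3 := by
      rw [hsdef, div_pow, ← pow_mul]
    have hid := schwV_identity m r hm0 hmr
    have hI0 := integral_k_nonneg m r hm0 hmr
    have hIle := integral_k_le m r hm0 hmr
    have heq : schwV m r - 4 * Real.pi / 3 * s ^ 3 - 2 * Real.pi * m * s ^ 2
        = (∫ ρ in (m / 2)..r, 4 * Real.pi * m * (ρ + m / 2) ^ 3 * (3 / 2 * m * ρ + m ^ 2 / 4) / ρ ^ 4)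
          - 56 * Real.pi / 3 * m ^ 3 := by
      rw [hid, hs3, hs2]; ring
    have hkey : |schwV m r - 4 * Real.pi / 3 * s ^ 3 - 2 * Real.pi * m * s ^ 2|
        ≤ 83 * Real.pi * μ ^ 2 * r := by
      rw [heq, abs_le]
      have hm2 : m ^ 2 ≤ μ ^ 2 := pow_le_pow_left₀ hm.1 hm.2 2
      have hub : 64 * Real.pi * m ^ 2 * (r - m / 2) ≤ 64 * Real.pi * μ ^ 2 * r := by
        have h1 : m ^ 2 * (r - m / 2) ≤ μ ^ 2 * r :=
          mul_le_mul hm2 (by linarith) (by linarith) (by positivity)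
        nlinarith [mul_le_mul_of_nonneg_left h1 (show (0:ℝ) ≤ 64 * Real.pi by positivity)]
      have hm3 : m ^ 3 ≤ μ ^ 2 * r := by
        have h1 : m ^ 2 * m ≤ μ ^ 2 * μ := mul_le_mul hm2 hm.2 hm.1 (sq_nonneg μ)
        have h2 : μ ^ 2 * μ ≤ μ ^ 2 * r := by nlinarith [sq_nonneg μ]
        nlinarith
      have hπm3 : 0 ≤ 56 * Real.pi / 3 * m ^ 3 := by positivity
      have hπm3' : 56 * Real.pi / 3 * m ^ 3 ≤ 56 * Real.pi / 3 * (μ ^ 2 * r) := by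
        nlinarith [mul_le_mul_of_nonneg_left hm3 (show (0:ℝ) ≤ 56 * Real.pi / 3 by positivity)]
      constructor
      · nlinarith
      · nlinarith
    have hrles : r ≤ s := by
      rw [hsdef, le_div_iff₀ hr0]
      nlinarith [mul_nonneg hrnn hm.1, sq_nonneg m]
    rw [hA32, hneg, hsA]
    have hgoal_eq : 2 / A * (schwV m r - 4 * Real.pi / 3 * s ^ 3) - m
        = (schwV m r - 4 * Real.pi / 3 * s ^ 3 - 2 * Real.pi * m * s ^ 2) / (2 * Real.pi * s ^ 2) := by
      rw [hAs]
      field_simp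
      ring
    rw [hgoal_eq, abs_div, abs_of_pos (by positivity : (0:ℝ) < 2 * Real.pi * s ^ 2),
      div_le_iff₀ (by positivity)]
    have hrhs : 83 * Real.sqrt Real.pi * μ ^ 2 * (2 * Real.sqrt Real.pi * s)⁻¹
        * (2 * Real.pi * s ^ 2) = 83 * Real.pi * μ ^ 2 * s := by
      have hq : Real.sqrt Real.pi ^ 2 = Real.pi := Real.sq_sqrt hπ.le
      set q := Real.sqrt Real.pi with hqdef
      rw [← hq]
      have hq0 : q ≠ 0 := ne_of_gt hsqπ
      field_simp
    rw [hrhs]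
    calc |schwV m r - 4 * Real.pi / 3 * s ^ 3 - 2 * Real.pi * m * s ^ 2|
        ≤ 83 * Real.pi * μ ^ 2 * r := hkey
      _ ≤ 83 * Real.pi * μ ^ 2 * s := by
          nlinarith [mul_le_mul_of_nonneg_left hrles (show (0:ℝ) ≤ 83 * Real.pi * μ ^ 2 by positivity)]
end

section
/- Let m > 0. The second derivative of the Schwarzschild isoperimetric profile satisfies: φ_m″(A) < 0 for 16π m² < A < 36π m², φ_m″(A) = 0 for A = 36π m², and φ_m″(A) > 0 for A > 36π m². -/
namespace SchwAux

open Real Set Function Filter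

/-- `s(A) = √(A/(4π))`. -/
noncomputable def sfun (A : ℝ) : ℝ := Real.sqrt (A / (4 * Real.pi))

/-- Explicit inverse of the area function, from the quadratic formula. -/
noncomputable def rfun (m A : ℝ) : ℝ :=
  ((sfun A - m) + Real.sqrt ((sfun A - m) ^ 2 - m ^ 2)) / 2

lemma sfun_gt {m A : ℝ} (hm : 0 < m) (hA : 16 * Real.pi * m ^ 2 < A) :
    2 * m < sfun A := by
  have hπ := Real.pi_pos
  rw [sfun, show (2:ℝ) * m = 2*m from rfl]
  rw [Real.lt_sqrt (by positivity), lt_div_iff₀ (by positivity)]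
  nlinarith

lemma rfun_gt {m A : ℝ} (hm : 0 < m) (hA : 16 * Real.pi * m ^ 2 < A) :
    m / 2 < rfun m A := by
  have hs := sfun_gt hm hA
  have h2 : 0 ≤ Real.sqrt ((sfun A - m) ^ 2 - m ^ 2) := Real.sqrt_nonneg _
  rw [rfun]; linarith

lemma rfun_pos {m A : ℝ} (hm : 0 < m) (hA : 16 * Real.pi * m ^ 2 < A) :
    0 < rfun m A := lt_trans (by linarith) (rfun_gt hm hA)

lemma rfun_quad {m A : ℝ} (hm : 0 < m) (hA : 16 * Real.pi * m ^ 2 < A) :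
    (rfun m A + m / 2) ^ 2 = sfun A * rfun m A := by
  have hs := sfun_gt hm hA
  have hD : 0 ≤ (sfun A - m) ^ 2 - m ^ 2 := by nlinarith
  have h := Real.sq_sqrt hD
  rw [rfun]
  linear_combination h / 4

lemma sfun_sq {m A : ℝ} (hm : 0 < m) (hA : 16 * Real.pi * m ^ 2 < A) :
    sfun A ^ 2 = A / (4 * Real.pi) := by
  have hπ := Real.pi_pos
  have hA0 : (0:ℝ) ≤ A / (4 * Real.pi) := by
    have h16 : (0:ℝ) < 16 * Real.pi * m ^ 2 := by positivity
    have : 0 < A := lt_trans h16 hA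
    positivity
  exact Real.sq_sqrt hA0

end SchwAux

namespace SchwAux
open Real Set Function Filter

lemma schwA_rfun {m A : ℝ} (hm : 0 < m) (hA : 16 * Real.pi * m ^ 2 < A) :
    schwA m (rfun m A) = A := by
  have hπ := Real.pi_pos
  have hr := rfun_pos hm hA
  have hr0 : rfun m A ≠ 0 := ne_of_gt hr
  have hq := rfun_quad hm hA
  have hs2 := sfun_sq hm hA
  calc schwA m (rfun m A)
      = 4 * Real.pi * (((rfun m A + m/2) ^ 2) ^ 2) / rfun m A ^ 2 := by
        rw [schwA]; field_simp
    _ = 4 * Real.pi * ((sfun A * rfun m A) ^ 2) / rfun m A ^ 2 := by rw [hq]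
    _ = 4 * Real.pi * sfun A ^ 2 := by field_simp
    _ = A := by rw [hs2]; field_simp

lemma hasDerivAt_schwA {m r : ℝ} (hm : 0 < m) (hr : 0 < r) :
    HasDerivAt (schwA m) (8 * Real.pi * (1 + m / (2 * r)) ^ 3 * (r - m / 2)) r := by
  have h2r : (2 : ℝ) * r ≠ 0 := by positivity
  have h1 : HasDerivAt (fun x : ℝ => 1 + m / (2 * x))
      (0 + (0 * (2 * r) - m * (2 * 1)) / (2 * r) ^ 2) r := by
    have := (hasDerivAt_const r 1).add
      ((hasDerivAt_const r m).div ((hasDerivAt_id r).const_mul 2) (by simpa using h2r))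
    exact this
  have h2 : HasDerivAt (fun x : ℝ => 4 * Real.pi * x ^ 2)
      (4 * Real.pi * (↑2 * r ^ 1)) r := (hasDerivAt_pow 2 r).const_mul (4 * Real.pi)
  have h3 := h2.mul (h1.pow 4)
  have : HasDerivAt (schwA m) _ r := h3
  convert this using 1
  have hrne : r ≠ 0 := ne_of_gt hr
  simp only [Pi.pow_apply, one_add_div h2r, Nat.reduceSub]
  field_simp
  ring

lemma schwA_strictMonoOn {m : ℝ} (hm : 0 < m) :
    StrictMonoOn (schwA m) (Set.Ici (m / 2)) := by
  apply strictMonoOn_of_deriv_pos (convex_Ici _)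
  · intro x hx
    have hx0 : 0 < x := lt_of_lt_of_le (by linarith) hx
    exact (hasDerivAt_schwA hm hx0).continuousAt.continuousWithinAt
  · intro x hx
    rw [interior_Ici] at hx
    have hx0 : 0 < x := lt_trans (by linarith) hx
    rw [(hasDerivAt_schwA hm hx0).deriv]
    have hu : 0 < 1 + m / (2 * x) := by positivity
    have : 0 < x - m / 2 := by simpa [sub_pos] using hx
    positivity

lemma invFunOn_eq_rfun {m A : ℝ} (hm : 0 < m) (hA : 16 * Real.pi * m ^ 2 < A) :
    Function.invFunOn (schwA m) (Set.Ici (m / 2)) A = rfun m A := by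
  have hr := rfun_gt hm hA
  have hmem : rfun m A ∈ Set.Ici (m / 2) := le_of_lt hr
  have hAr := schwA_rfun hm hA
  have hex : ∃ a ∈ Set.Ici (m / 2), schwA m a = A := ⟨_, hmem, hAr⟩
  exact (schwA_strictMonoOn hm).injOn (Function.invFunOn_mem hex) hmem
    ((Function.invFunOn_eq hex).trans hAr.symm)

end SchwAux

namespace SchwAux
open Real Set Function Filter Topology intervalIntegral

lemma integrand_contOn (m : ℝ) :
    ContinuousOn (fun ρ : ℝ => 4 * Real.pi * ρ ^ 2 * (1 + m / (2 * ρ)) ^ 6) (Set.Ioi 0) := by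
  apply ContinuousOn.mul
  · fun_prop
  · apply ContinuousOn.pow
    apply ContinuousOn.add continuousOn_const
    exact ContinuousOn.div continuousOn_const (by fun_prop)
      (fun x hx => by have : (0:ℝ) < x := hx; positivity)

lemma hasDerivAt_schwV {m r : ℝ} (hm : 0 < m) (hr : m / 2 < r) :
    HasDerivAt (schwV m) (4 * Real.pi * r ^ 2 * (1 + m / (2 * r)) ^ 6) r := by
  have hr0 : 0 < r := lt_trans (by linarith) hr
  have hsub : Set.uIcc (m / 2) r ⊆ Set.Ioi 0 := by
    intro x hx
    rw [Set.uIcc_of_le hr.le] at hx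
    exact lt_of_lt_of_le (by linarith) hx.1
  have hint : IntervalIntegrable (fun ρ : ℝ => 4 * Real.pi * ρ ^ 2 * (1 + m / (2 * ρ)) ^ 6)
      MeasureTheory.volume (m / 2) r := ((integrand_contOn m).mono hsub).intervalIntegrable
  have hmeas := (integrand_contOn m).stronglyMeasurableAtFilter
      (μ := MeasureTheory.volume) isOpen_Ioi r hr0
  have hcont : ContinuousAt (fun ρ : ℝ => 4 * Real.pi * ρ ^ 2 * (1 + m / (2 * ρ)) ^ 6) r :=
    (integrand_contOn m).continuousAt (IsOpen.mem_nhds isOpen_Ioi hr0)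
  exact intervalIntegral.integral_hasDerivAt_right hint hmeas hcont

lemma continuous_rfun (m : ℝ) : Continuous (rfun m) := by
  unfold rfun sfun
  fun_prop

lemma hasDerivAt_rfun {m A : ℝ} (hm : 0 < m) (hA : 16 * Real.pi * m ^ 2 < A) :
    HasDerivAt (rfun m)
      (8 * Real.pi * (1 + m / (2 * rfun m A)) ^ 3 * (rfun m A - m / 2))⁻¹ A := by
  have hπ := Real.pi_pos
  have hr := rfun_gt hm hA
  have hr0 : 0 < rfun m A := rfun_pos hm hA
  refine HasDerivAt.of_local_left_inverse (continuous_rfun m).continuousAt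
    (hasDerivAt_schwA hm hr0) ?_ ?_
  · have hu : 0 < 1 + m / (2 * rfun m A) := by positivity
    have hrm : 0 < rfun m A - m / 2 := by linarith
    positivity
  · filter_upwards [Ioi_mem_nhds hA] with B hB using schwA_rfun hm hB

/-- First derivative of the profile, as a function of `r`. -/
noncomputable def Pfun (m r : ℝ) : ℝ := r ^ 2 * (1 + m / (2 * r)) ^ 3 / (2 * (r - m / 2))

lemma phi_eventuallyEq {m A : ℝ} (hm : 0 < m) (hA : 16 * Real.pi * m ^ 2 < A) :
    schwPhi m =ᶠ[𝓝 A] fun B => schwV m (rfun m B) := by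
  filter_upwards [Ioi_mem_nhds hA] with B hB
  rw [schwPhi, invFunOn_eq_rfun hm hB]

lemma hasDerivAt_phi {m A : ℝ} (hm : 0 < m) (hA : 16 * Real.pi * m ^ 2 < A) :
    HasDerivAt (schwPhi m) (Pfun m (rfun m A)) A := by
  have hπ := Real.pi_pos
  have hr := rfun_gt hm hA
  have hr0 : 0 < rfun m A := rfun_pos hm hA
  have hcomp := HasDerivAt.comp A (hasDerivAt_schwV hm hr) (hasDerivAt_rfun hm hA)
  have hphi : HasDerivAt (schwPhi m)
      (4 * Real.pi * rfun m A ^ 2 * (1 + m / (2 * rfun m A)) ^ 6 *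
        (8 * Real.pi * (1 + m / (2 * rfun m A)) ^ 3 * (rfun m A - m / 2))⁻¹) A :=
    hcomp.congr_of_eventuallyEq (phi_eventuallyEq hm hA)
  convert hphi using 1
  have hu : 0 < 1 + m / (2 * rfun m A) := by positivity
  have hrm : 0 < rfun m A - m / 2 := by linarith
  have hZ : 8 * Real.pi * (1 + m / (2 * rfun m A)) ^ 3 * (rfun m A - m / 2) ≠ 0 := by
    positivity
  rw [Pfun, ← div_eq_mul_inv,
    div_eq_div_iff (ne_of_gt (by linarith : (0:ℝ) < 2 * (rfun m A - m / 2))) hZ]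
  field_simp
  ring

end SchwAux

namespace SchwAux
open Real Set Function Filter Topology

lemma hasDerivAt_Pfun {m r : ℝ} (hm : 0 < m) (hr : m / 2 < r) :
    HasDerivAt (Pfun m)
      ((1 + m / (2 * r)) ^ 2 * (r ^ 2 - 2 * m * r + m ^ 2 / 4) / (2 * (r - m / 2) ^ 2)) r := by
  have hr0 : 0 < r := lt_trans (by linarith) hr
  have h2r : (2 : ℝ) * r ≠ 0 := by positivity
  have hu1 : HasDerivAt (fun x : ℝ => 1 + m / (2 * x))
      (0 + (0 * (2 * r) - m * (2 * 1)) / (2 * r) ^ 2) r := by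
    have := (hasDerivAt_const r 1).add
      ((hasDerivAt_const r m).div ((hasDerivAt_id r).const_mul 2) (by simpa using h2r))
    exact this
  have hN := (hasDerivAt_pow 2 r).mul (hu1.pow 3)
  have hD : HasDerivAt (fun x : ℝ => 2 * (x - m / 2)) (2 * 1) r :=
    ((hasDerivAt_id r).sub_const (m / 2)).const_mul 2
  have hDne : 2 * (r - m / 2) ≠ 0 := ne_of_gt (by linarith)
  have hPd := hN.div hD (by simpa using hDne)
  have : HasDerivAt (Pfun m) _ r := hPd
  convert this using 1
  have hrne : r ≠ 0 := ne_of_gt hr0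
  have hrm : (0:ℝ) < r - m / 2 := by linarith
  simp only [Pi.pow_apply, Pi.mul_apply, one_add_div h2r, Nat.reduceSub]
  rw [div_eq_div_iff (by positivity) (by positivity)]
  field_simp
  ring

lemma key_factor {m A : ℝ} (hm : 0 < m) (hA : 16 * Real.pi * m ^ 2 < A) :
    rfun m A ^ 2 - 2 * m * rfun m A + m ^ 2 / 4 = rfun m A * (sfun A - 3 * m) := by
  linear_combination rfun_quad hm hA

lemma deriv_deriv_phi {m A : ℝ} (hm : 0 < m) (hA : 16 * Real.pi * m ^ 2 < A) :
    deriv (deriv (schwPhi m)) A =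
      (1 + m / (2 * rfun m A)) ^ 2 * (rfun m A * (sfun A - 3 * m)) /
          (2 * (rfun m A - m / 2) ^ 2) *
        (8 * Real.pi * (1 + m / (2 * rfun m A)) ^ 3 * (rfun m A - m / 2))⁻¹ := by
  have hr := rfun_gt hm hA
  have hev : deriv (schwPhi m) =ᶠ[𝓝 A] fun B => Pfun m (rfun m B) := by
    filter_upwards [Ioi_mem_nhds hA] with B hB using (hasDerivAt_phi hm hB).deriv
  rw [hev.deriv_eq]
  have hcomp := HasDerivAt.comp A (hasDerivAt_Pfun hm hr) (hasDerivAt_rfun hm hA)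
  rw [show (fun B => Pfun m (rfun m B)) = Pfun m ∘ rfun m from rfl, hcomp.deriv,
    key_factor hm hA]

end SchwAux

open SchwAux in
/-- Sign of `φ_m″`: negative on `(16πm², 36πm²)`, zero at `36πm²`, and
positive on `(36πm², ∞)`. -/
theorem schwPhi_second_deriv_sign (m : ℝ) (hm : 0 < m) :
    (∀ A : ℝ, 16 * Real.pi * m ^ 2 < A → A < 36 * Real.pi * m ^ 2 →
      deriv (deriv (schwPhi m)) A < 0) ∧
    deriv (deriv (schwPhi m)) (36 * Real.pi * m ^ 2) = 0 ∧
    (∀ A : ℝ, 36 * Real.pi * m ^ 2 < A → 0 < deriv (deriv (schwPhi m)) A) := by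
  have hπ := Real.pi_pos
  have main : ∀ A : ℝ, 16 * Real.pi * m ^ 2 < A →
      ∃ C : ℝ, 0 < C ∧ deriv (deriv (schwPhi m)) A = C * (sfun A - 3 * m) := by
    intro A hA
    have hr := rfun_gt hm hA
    have hr0 : 0 < rfun m A := rfun_pos hm hA
    have hu : 0 < 1 + m / (2 * rfun m A) := by positivity
    have hrm : 0 < rfun m A - m / 2 := by linarith
    refine ⟨(1 + m / (2 * rfun m A)) ^ 2 * rfun m A / (2 * (rfun m A - m / 2) ^ 2) *
      (8 * Real.pi * (1 + m / (2 * rfun m A)) ^ 3 * (rfun m A - m / 2))⁻¹, by positivity, ?_⟩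
    rw [deriv_deriv_phi hm hA]
    ring
  have h36 : 16 * Real.pi * m ^ 2 < 36 * Real.pi * m ^ 2 := by
    have hm2 : 0 < m ^ 2 := by positivity
    nlinarith
  refine ⟨?_, ?_, ?_⟩
  · intro A hA hA'
    obtain ⟨C, hC, hE⟩ := main A hA
    have hs : sfun A < 3 * m := by
      rw [sfun, show Real.sqrt (A / (4 * Real.pi)) < 3 * m ↔ _ from
        Real.sqrt_lt' (by positivity), div_lt_iff₀ (by positivity)]
      nlinarith
    rw [hE]
    exact mul_neg_of_pos_of_neg hC (by linarith)
  · obtain ⟨C, hC, hE⟩ := main _ h36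
    have hs : sfun (36 * Real.pi * m ^ 2) = 3 * m := by
      rw [sfun, show 36 * Real.pi * m ^ 2 / (4 * Real.pi) = (3 * m) ^ 2 by field_simp; ring]
      exact Real.sqrt_sq (by positivity)
    rw [hE, hs]
    ring
  · intro A hA
    obtain ⟨C, hC, hE⟩ := main A (lt_trans h36 hA)
    have hs : 3 * m < sfun A := by
      rw [sfun, Real.lt_sqrt (by positivity), lt_div_iff₀ (by positivity)]
      nlinarith
    rw [hE]
    exact mul_pos hC (by linarith)
end

section
/- For m > 0 and all A ≥ 36π m², one has φ_m(A) − (2/3) A φ_m′(A) > 0. -/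
noncomputable def gFun (m A : ℝ) : ℝ :=
  (Real.sqrt (A / (4 * Real.pi)) - m +
    Real.sqrt ((Real.sqrt (A / (4 * Real.pi)) - m) ^ 2 - m ^ 2)) / 2

noncomputable def Wfun (m x : ℝ) : ℝ :=
  Real.pi * ((4/3) * x ^ 3 + 6 * m * x ^ 2 + 15 * m ^ 2 * x + 10 * m ^ 3 * Real.log x
    - (15/4) * m ^ 4 * x⁻¹ - (3/8) * m ^ 5 * (x ^ 2)⁻¹ - (1/48) * m ^ 6 * (x ^ 3)⁻¹)

lemma schwA_eq (m x : ℝ) (hx : x ≠ 0) :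
    schwA m x = Real.pi * (2 * x + m) ^ 4 / (4 * x ^ 2) := by
  unfold schwA; field_simp; ring

lemma schwA_injOn (m : ℝ) (hm : 0 < m) : Set.InjOn (schwA m) (Set.Ici (m / 2)) := by
  intro x hx y hy hxy
  have hm2 : 0 < m / 2 := by linarith
  have hx0 : 0 < x := lt_of_lt_of_le hm2 hx
  have hy0 : 0 < y := lt_of_lt_of_le hm2 hy
  have hπ : (0:ℝ) < Real.pi := Real.pi_pos
  rw [schwA_eq m x hx0.ne', schwA_eq m y hy0.ne'] at hxy
  have hx' : m / 2 ≤ x := hx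
  have hy' : m / 2 ≤ y := hy
  field_simp at hxy
  have h1 : (2*x+m)^4 * y^2 = (2*y+m)^4 * x^2 := by
    have h0 : Real.pi * ((2*x+m)^4 * y^2 * 4) = Real.pi * ((2*y+m)^4 * x^2 * 4) := by
      linear_combination (4*Real.pi) * hxy
    have h0' := mul_left_cancel₀ Real.pi_ne_zero h0
    linear_combination (1/4) * h0'
  have hfac : ((2*x+m)^2*y - (2*y+m)^2*x) * ((2*x+m)^2*y + (2*y+m)^2*x) = 0 := by
    linear_combination h1
  have h2 : (2*x+m)^2*y = (2*y+m)^2*x := by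
    rcases mul_eq_zero.1 hfac with h | h
    · linarith
    · exfalso
      nlinarith [mul_pos (pow_pos (by linarith : (0:ℝ) < 2*x+m) 2) hy0,
        mul_pos (pow_pos (by linarith : (0:ℝ) < 2*y+m) 2) hx0]
  have hfac2 : (x - y) * (4*x*y - m^2) = 0 := by linear_combination h2
  rcases mul_eq_zero.1 hfac2 with h | h
  · linarith
  · have hxm : x = m/2 := le_antisymm (by nlinarith) hx'
    have hym : y = m/2 := le_antisymm (by nlinarith) hy'
    rw [hxm, hym]

lemma Wfun_hasDerivAt (m x : ℝ) (hx : 0 < x) :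
    HasDerivAt (Wfun m) (4 * Real.pi * x ^ 2 * (1 + m / (2 * x)) ^ 6) x := by
  have hx0 : x ≠ 0 := hx.ne'
  have h1 : HasDerivAt (fun y : ℝ => (4/3 : ℝ) * y ^ 3) ((4/3 : ℝ) * (3 * x ^ 2)) x := by
    simpa using (hasDerivAt_pow 3 x).const_mul (4/3 : ℝ)
  have h2 : HasDerivAt (fun y : ℝ => 6 * m * y ^ 2) (6 * m * (2 * x)) x := by
    simpa using (hasDerivAt_pow 2 x).const_mul (6 * m)
  have h3 : HasDerivAt (fun y : ℝ => 15 * m ^ 2 * y) (15 * m ^ 2) x := by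
    simpa using (hasDerivAt_id x).const_mul (15 * m ^ 2)
  have h4 : HasDerivAt (fun y : ℝ => 10 * m ^ 3 * Real.log y) (10 * m ^ 3 * x⁻¹) x :=
    (Real.hasDerivAt_log hx0).const_mul (10 * m ^ 3)
  have h5 : HasDerivAt (fun y : ℝ => (15/4 : ℝ) * m ^ 4 * y⁻¹)
      ((15/4 : ℝ) * m ^ 4 * (-(x ^ 2)⁻¹)) x := (hasDerivAt_inv hx0).const_mul _
  have h6 : HasDerivAt (fun y : ℝ => (3/8 : ℝ) * m ^ 5 * (y ^ 2)⁻¹)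
      ((3/8 : ℝ) * m ^ 5 * (-(2 * x) / (x ^ 2) ^ 2)) x := by
    have := ((hasDerivAt_pow 2 x).inv (pow_ne_zero 2 hx0)).const_mul ((3/8 : ℝ) * m ^ 5)
    simpa using this
  have h7 : HasDerivAt (fun y : ℝ => (1/48 : ℝ) * m ^ 6 * (y ^ 3)⁻¹)
      ((1/48 : ℝ) * m ^ 6 * (-(3 * x ^ 2) / (x ^ 3) ^ 2)) x := by
    have := ((hasDerivAt_pow 3 x).inv (pow_ne_zero 3 hx0)).const_mul ((1/48 : ℝ) * m ^ 6)
    simpa using this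
  have h := ((((((h1.add h2).add h3).add h4).sub h5).sub h6).sub h7).const_mul Real.pi
  have heq : Wfun m = fun y : ℝ =>
      Real.pi * ((4/3) * y ^ 3 + 6 * m * y ^ 2 + 15 * m ^ 2 * y + 10 * m ^ 3 * Real.log y
        - (15/4) * m ^ 4 * y⁻¹ - (3/8) * m ^ 5 * (y ^ 2)⁻¹ - (1/48) * m ^ 6 * (y ^ 3)⁻¹) := rfl
  rw [heq]
  refine h.congr_deriv ?_
  field_simp
  ring

lemma gFun_spec (m : ℝ) (hm : 0 < m) {A : ℝ} (hA : 16 * Real.pi * m ^ 2 ≤ A) :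
    gFun m A ∈ Set.Ici (m / 2) ∧ schwA m (gFun m A) = A := by
  have hπ : (0:ℝ) < Real.pi := Real.pi_pos
  set s := Real.sqrt (A / (4 * Real.pi)) with hs_def
  have hA0 : 0 ≤ A / (4 * Real.pi) := div_nonneg (by nlinarith) (by positivity)
  have hs2 : s ^ 2 = A / (4 * Real.pi) := Real.sq_sqrt hA0
  have hs : 2 * m ≤ s := by
    have h1 : Real.sqrt ((2*m)^2) ≤ s := Real.sqrt_le_sqrt (by
      rw [le_div_iff₀ (by positivity)]; nlinarith)
    rwa [Real.sqrt_sq (by linarith)] at h1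
  have harg : 0 ≤ (s - m)^2 - m^2 := by nlinarith
  set d := Real.sqrt ((s - m)^2 - m^2) with hd_def
  have hd2 : d^2 = (s-m)^2 - m^2 := Real.sq_sqrt harg
  have hd0 : 0 ≤ d := Real.sqrt_nonneg _
  have hg : gFun m A = (s - m + d)/2 := rfl
  have hr : m/2 ≤ (s - m + d)/2 := by linarith
  have hr0 : (0:ℝ) < (s - m + d)/2 := by linarith
  refine ⟨by rw [Set.mem_Ici, hg]; exact hr, ?_⟩
  rw [hg, schwA_eq m _ hr0.ne']
  have h2r : 2*((s-m+d)/2) + m = s + d := by ring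
  have hkey : (s+d)^2 = 4*s*((s-m+d)/2) := by linear_combination hd2
  calc Real.pi * (2*((s-m+d)/2)+m)^4/(4*((s-m+d)/2)^2)
      = Real.pi * ((s+d)^2)^2/(4*((s-m+d)/2)^2) := by rw [h2r]; ring_nf
    _ = Real.pi * (4*s*((s-m+d)/2))^2/(4*((s-m+d)/2)^2) := by rw [hkey]
    _ = 4*Real.pi*s^2 := by
        rw [div_eq_iff (by positivity : (4*((s-m+d)/2)^2 : ℝ) ≠ 0)]; ring
    _ = A := by rw [hs2]; field_simp

lemma invFunOn_eq_gFun (m : ℝ) (hm : 0 < m) {A : ℝ} (hA : 16 * Real.pi * m ^ 2 ≤ A) :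
    Function.invFunOn (schwA m) (Set.Ici (m / 2)) A = gFun m A := by
  obtain ⟨hmem, heq⟩ := gFun_spec m hm hA
  have hex : ∃ x ∈ Set.Ici (m/2), schwA m x = A := ⟨_, hmem, heq⟩
  exact schwA_injOn m hm (Function.invFunOn_mem hex) hmem
    (by rw [Function.invFunOn_eq hex, heq])

lemma gFun_hasDerivAt (m : ℝ) (hm : 0 < m) {A : ℝ} (hA : 16 * Real.pi * m ^ 2 < A) :
    HasDerivAt (gFun m)
      (gFun m A / (8 * Real.pi * Real.sqrt (A / (4 * Real.pi)) *
        Real.sqrt ((Real.sqrt (A / (4 * Real.pi)) - m) ^ 2 - m ^ 2))) A := by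
  have hπ : (0:ℝ) < Real.pi := Real.pi_pos
  set s := Real.sqrt (A / (4 * Real.pi)) with hs_def
  have hA0 : 0 < A / (4 * Real.pi) := div_pos (by nlinarith) (by positivity)
  have hs2 : s ^ 2 = A / (4 * Real.pi) := Real.sq_sqrt hA0.le
  have hs : 2 * m < s := by
    have h1 : Real.sqrt ((2*m)^2) < s := Real.sqrt_lt_sqrt (by positivity) (by
      rw [lt_div_iff₀ (by positivity)]; nlinarith)
    rwa [Real.sqrt_sq (by linarith)] at h1
  have hs0 : 0 < s := by linarith
  have harg : 0 < (s - m)^2 - m^2 := by nlinarith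
  set d := Real.sqrt ((s - m)^2 - m^2) with hd_def
  have hd2 : d^2 = (s-m)^2 - m^2 := Real.sq_sqrt harg.le
  have hd0 : 0 < d := Real.sqrt_pos.2 harg
  have h1 : HasDerivAt (fun x : ℝ => x / (4*Real.pi)) (1/(4*Real.pi)) A := by
    simpa using (hasDerivAt_id A).div_const (4*Real.pi)
  have h2 : HasDerivAt (fun x : ℝ => Real.sqrt (x/(4*Real.pi)))
      ((1/(4*Real.pi))/(2*s)) A := h1.sqrt hA0.ne'
  have h3 : HasDerivAt (fun x : ℝ => Real.sqrt (x/(4*Real.pi)) - m)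
      ((1/(4*Real.pi))/(2*s)) A := h2.sub_const m
  have h4 : HasDerivAt (fun x : ℝ => (Real.sqrt (x/(4*Real.pi)) - m)^2 - m^2)
      ((2:ℕ) * (s - m)^1 * ((1/(4*Real.pi))/(2*s))) A := (h3.pow 2).sub_const (m^2)
  have h5 : HasDerivAt (fun x : ℝ => Real.sqrt ((Real.sqrt (x/(4*Real.pi)) - m)^2 - m^2))
      (((2:ℕ) * (s - m)^1 * ((1/(4*Real.pi))/(2*s)))/(2*d)) A := h4.sqrt harg.ne'
  have h6 := (h3.add h5).div_const 2
  have hval : gFun m A / (8 * Real.pi * s * d)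
      = ((1/(4*Real.pi))/(2*s) + ((2:ℕ) * (s - m)^1 * ((1/(4*Real.pi))/(2*s)))/(2*d))/2 := by
    have hg : gFun m A = (s - m + d)/2 := rfl
    rw [hg]
    push_cast
    field_simp
    ring
  rw [hval]
  exact h6

lemma schwV_eq (m : ℝ) (hm : 0 < m) {r : ℝ} (hr : m / 2 ≤ r) :
    schwV m r = Wfun m r - Wfun m (m / 2) := by
  have hm2 : (0:ℝ) < m / 2 := by linarith
  unfold schwV
  apply intervalIntegral.integral_eq_sub_of_hasDerivAt
  · intro x hx
    rw [Set.uIcc_of_le hr] at hx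
    exact Wfun_hasDerivAt m x (lt_of_lt_of_le hm2 hx.1)
  · apply ContinuousOn.intervalIntegrable
    intro x hx
    rw [Set.uIcc_of_le hr] at hx
    have hx0 : x ≠ 0 := (lt_of_lt_of_le hm2 hx.1).ne'
    apply ContinuousWithinAt.mul
    · exact (continuousWithinAt_const.mul ((continuousWithinAt_id).pow 2))
    · exact ((continuousWithinAt_const.add (continuousWithinAt_const.div
        (continuousWithinAt_const.mul continuousWithinAt_id)
        (mul_ne_zero two_ne_zero hx0))).pow 6)

lemma final_pos (m r L : ℝ) (hm : 0 < m) (hr : 1.85 * m ≤ r) (hL : 1 ≤ L) :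
    Real.pi * (2*r+m)^7 / (48*r^3*(2*r-m)) <
      Real.pi * ((4/3) * r ^ 3 + 6 * m * r ^ 2 + 15 * m ^ 2 * r + 10 * m ^ 3 * L
        - (15/4) * m ^ 4 * r⁻¹ - (3/8) * m ^ 5 * (r ^ 2)⁻¹ - (1/48) * m ^ 6 * (r ^ 3)⁻¹) := by
  have hπ : (0:ℝ) < Real.pi := Real.pi_pos
  have hr0 : 0 < r := by nlinarith
  have h2rm : 0 < 2*r - m := by nlinarith
  have hs : 0 ≤ r - 1.85*m := by linarith
  have hF : 0 < 1920*r^3*(2*r-m)*m^3*L + (256*r^6*m + 1920*r^5*m^2 - 5120*r^4*m^3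
      - 2560*r^3*m^4 + 240*r^2*m^5 + 8*r*m^6) := by
    have h1 : 1920*r^3*(2*r-m)*m^3*1 ≤ 1920*r^3*(2*r-m)*m^3*L :=
      mul_le_mul_of_nonneg_left hL (by positivity)
    nlinarith [h1,
      mul_pos (pow_pos hm 7) hm,
      mul_nonneg (pow_nonneg hs 1) (pow_nonneg hm.le 6),
      mul_nonneg (pow_nonneg hs 2) (pow_nonneg hm.le 5),
      mul_nonneg (pow_nonneg hs 3) (pow_nonneg hm.le 4),
      mul_nonneg (pow_nonneg hs 4) (pow_nonneg hm.le 3),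
      mul_nonneg (pow_nonneg hs 5) (pow_nonneg hm.le 2),
      mul_nonneg (pow_nonneg hs 6) (pow_nonneg hm.le 1),
      pow_pos hm 7]
  rw [div_lt_iff₀ (by positivity)]
  have key : Real.pi * ((4/3) * r ^ 3 + 6 * m * r ^ 2 + 15 * m ^ 2 * r + 10 * m ^ 3 * L
        - (15/4) * m ^ 4 * r⁻¹ - (3/8) * m ^ 5 * (r ^ 2)⁻¹ - (1/48) * m ^ 6 * (r ^ 3)⁻¹)
        * (48*r^3*(2*r-m)) - Real.pi * (2*r+m)^7
      = Real.pi * (1920*r^3*(2*r-m)*m^3*L + (256*r^6*m + 1920*r^5*m^2 - 5120*r^4*m^3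
        - 2560*r^3*m^4 + 240*r^2*m^5 + 8*r*m^6)) / 4 := by
    field_simp
    ring
  nlinarith [mul_pos hπ hF, key]

set_option maxHeartbeats 1000000 in
/-- For `m > 0` and `A ≥ 36πm²`, `φ_m(A) − (2/3) A φ_m′(A) > 0`. -/
theorem schwPhi_aux_pos (m : ℝ) (hm : 0 < m) :
    ∀ A : ℝ, 36 * Real.pi * m ^ 2 ≤ A →
      0 < schwPhi m A - 2 / 3 * A * deriv (schwPhi m) A := by
  intro A hA
  have hπ : (0:ℝ) < Real.pi := Real.pi_pos
  have hm2 : (0:ℝ) < m ^ 2 := by positivity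
  have hAgt : 16 * Real.pi * m ^ 2 < A := by nlinarith
  have hAge : 16 * Real.pi * m ^ 2 ≤ A := hAgt.le
  set s := Real.sqrt (A / (4 * Real.pi)) with hs_def
  set d := Real.sqrt ((s - m) ^ 2 - m ^ 2) with hd_def
  have hA0 : 0 ≤ A / (4 * Real.pi) := div_nonneg (by nlinarith) (by positivity)
  have hs2 : s ^ 2 = A / (4 * Real.pi) := Real.sq_sqrt hA0
  have hs3 : 3 * m ≤ s := by
    have h1 : Real.sqrt ((3*m)^2) ≤ s := Real.sqrt_le_sqrt (by
      rw [le_div_iff₀ (by positivity)]; nlinarith)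
    rwa [Real.sqrt_sq (by linarith)] at h1
  have harg : 0 < (s - m) ^ 2 - m ^ 2 := by nlinarith
  have hd2 : d ^ 2 = (s - m) ^ 2 - m ^ 2 := Real.sq_sqrt harg.le
  have hd0 : 0 < d := Real.sqrt_pos.2 harg
  have hd17 : 1.7 * m ≤ d := by nlinarith [hd2, hd0.le]
  set r := gFun m A with hr_set
  have hr_def : r = (s - m + d) / 2 := rfl
  have hr185 : 1.85 * m ≤ r := by rw [hr_def]; linarith
  have hr0 : 0 < r := by nlinarith
  have hrm : m / 2 < r := by nlinarith
  have h2rm : 0 < 2 * r - m := by nlinarith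
  have hs0 : 0 < s := by linarith
  -- algebraic relations
  have hsr : (2 * r + m) ^ 2 = 4 * s * r := by rw [hr_def]; linear_combination hd2
  have hs_eq : s = (2*r+m)^2 / (4*r) := by
    rw [eq_div_iff (by positivity)]; linear_combination -hsr
  have hd_eq : d = (2*r-m)*(2*r+m) / (4*r) := by
    rw [eq_div_iff (by positivity)]
    have hds : d = 2*r + m - s := by rw [hr_def]; ring
    rw [hds]; linear_combination hsr
  have hA_eq : A = Real.pi * (2*r+m)^4 / (4*r^2) := by
    rw [eq_div_iff (by positivity : (4*r^2 : ℝ) ≠ 0)]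
    have h4 : A = 4 * Real.pi * s ^ 2 := by rw [hs2]; field_simp
    rw [h4]; linear_combination -Real.pi * ((2*r+m)^2 + 4*s*r) * hsr
  -- log bound
  have hL : 1 ≤ Real.log r - Real.log (m/2) := by
    have h1 : Real.log r - Real.log (m/2) = Real.log (r/(m/2)) :=
      (Real.log_div hr0.ne' (by positivity)).symm
    rw [h1, Real.le_log_iff_exp_le (by positivity)]
    have he : Real.exp 1 < 2.7182818286 := Real.exp_one_lt_d9
    rw [le_div_iff₀ (by positivity)]
    nlinarith
  -- phi value and derivative
  have hev : (schwPhi m) =ᶠ[nhds A] (schwV m ∘ gFun m) := by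
    filter_upwards [isOpen_Ioi.mem_nhds (Set.mem_Ioi.2 hAgt)] with x hx
    simp only [schwPhi, Function.comp]
    rw [invFunOn_eq_gFun m hm (le_of_lt hx)]
  have hphiA : schwPhi m A = schwV m r := by
    simp only [schwPhi]; rw [invFunOn_eq_gFun m hm hAge]
  have hVr : HasDerivAt (schwV m) (4 * Real.pi * r ^ 2 * (1 + m / (2 * r)) ^ 6) r := by
    have hevV : schwV m =ᶠ[nhds r] (fun ρ => Wfun m ρ - Wfun m (m/2)) := by
      filter_upwards [isOpen_Ioi.mem_nhds (Set.mem_Ioi.2 hrm)] with x hx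
      rw [schwV_eq m hm (le_of_lt hx)]
    exact ((Wfun_hasDerivAt m r hr0).sub_const _).congr_of_eventuallyEq hevV
  have hgd := gFun_hasDerivAt m hm hAgt
  rw [← hs_def] at hgd
  rw [← hd_def] at hgd
  rw [← hr_set] at hgd
  have hcomp := hVr.comp A hgd
  have hderiv : deriv (schwPhi m) A
      = 4 * Real.pi * r ^ 2 * (1 + m / (2 * r)) ^ 6 * (r / (8 * Real.pi * s * d)) := by
    rw [hev.deriv_eq]; exact hcomp.deriv
  clear_value r d s
  rw [hphiA, hderiv, schwV_eq m hm hrm.le]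
  have e2 : 2 / 3 * A * (4 * Real.pi * r ^ 2 * (1 + m / (2 * r)) ^ 6 * (r / (8 * Real.pi * s * d)))
      = Real.pi * (2*r+m)^7 / (48*r^3*(2*r-m)) := by
    rw [hA_eq, hs_eq, hd_eq]
    have h2rm0 : (2*r-m) ≠ 0 := h2rm.ne'
    have h2rp0 : (2*r+m) ≠ 0 := by positivity
    field_simp
    ring
  rw [e2]
  have e1 : Wfun m r - Wfun m (m/2)
      = Real.pi * ((4/3) * r ^ 3 + 6 * m * r ^ 2 + 15 * m ^ 2 * r
        + 10 * m ^ 3 * (Real.log r - Real.log (m/2))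
        - (15/4) * m ^ 4 * r⁻¹ - (3/8) * m ^ 5 * (r ^ 2)⁻¹ - (1/48) * m ^ 6 * (r ^ 3)⁻¹) := by
    unfold Wfun
    have hm0 : m ≠ 0 := hm.ne'
    field_simp
    ring
  rw [e1, sub_pos]
  exact final_pos m r (Real.log r - Real.log (m/2)) hm hr185 hL
end
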